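/- arXiv:1606.02165 — 9 statements merged into one kernel-verified Lean document; each statement's English description precedes it below -/
import Mathlib

section
/- Let 0<ρ₁₂<1 and 0<Λ₁₁<∞, and let (σ_k) and (δ_k) be sequences of nonnegative reals satisfying σ_{k+1}² ≤ ρ₁₂ σ_k² + Λ₁₁ δ_k² for all k, and the quasiorthogonality ∑_{k=ℓ}^{ℓ+m} δ_k² ≤ Λ₄ σ_ℓ² for all ℓ, m. Then with Λ := (1+Λ₁₁Λ₄)/(1-ρ₁₂), for all ℓ, m ∈ ℕ it holds ∑_{k=ℓ}^{ℓ+m} σ_k² ≤ Λ σ_ℓ². -/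
theorem stmt_0 (ρ₁₂ Λ₁₁ Λ₄ : ℝ) (σ δ : ℕ → ℝ)
    (hρ : 0 < ρ₁₂) (hρ' : ρ₁₂ < 1) (hΛ : 0 < Λ₁₁) (hΛ₄ : 0 < Λ₄)
    (hσ : ∀ k, 0 ≤ σ k) (hδ : ∀ k, 0 ≤ δ k)
    (hred : ∀ k, σ (k + 1) ^ 2 ≤ ρ₁₂ * σ k ^ 2 + Λ₁₁ * δ k ^ 2)
    (hqo : ∀ ℓ m : ℕ, ∑ k ∈ Finset.Icc ℓ (ℓ + m), δ k ^ 2 ≤ Λ₄ * σ ℓ ^ 2) :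
    ∀ ℓ m : ℕ, ∑ k ∈ Finset.Icc ℓ (ℓ + m), σ k ^ 2 ≤
      (1 + Λ₁₁ * Λ₄) / (1 - ρ₁₂) * σ ℓ ^ 2 := by
  intro ℓ m
  have h1ρ : (0:ℝ) < 1 - ρ₁₂ := by linarith
  rw [div_mul_eq_mul_div, le_div_iff₀ h1ρ]
  have hσℓ : (0:ℝ) ≤ σ ℓ ^ 2 := sq_nonneg _
  -- rewrite sums over Icc as sums over range
  have hrw : ∀ (f : ℕ → ℝ) (n : ℕ), ∑ k ∈ Finset.Icc ℓ (ℓ + n), f k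
      = ∑ i ∈ Finset.range (n + 1), f (ℓ + i) := by
    intro f n
    induction n with
    | zero => simp
    | succ n ih =>
      rw [← add_assoc, Finset.sum_Icc_succ_top (by omega), ih, Finset.sum_range_succ,
        Finset.sum_range_succ]
      simp only [← Nat.add_assoc]
      rw [Finset.sum_range_succ (fun x => f (ℓ + x)) n]
  set S := ∑ k ∈ Finset.Icc ℓ (ℓ + m), σ k ^ 2 with hS
  have key : S ≤ (1 + Λ₁₁ * Λ₄) * σ ℓ ^ 2 + ρ₁₂ * S := by
    cases m with
    | zero =>
      have : S = σ ℓ ^ 2 := by simp [hS]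
      nlinarith [mul_nonneg hρ.le hσℓ, mul_nonneg (mul_nonneg hΛ.le hΛ₄.le) hσℓ]
    | succ m' =>
      have hSrw : S = σ ℓ ^ 2 + ∑ i ∈ Finset.range (m' + 1), σ (ℓ + i + 1) ^ 2 := by
        rw [hS, hrw, Finset.sum_range_succ', add_comm]
        simp only [Nat.add_zero]
        rfl
      have hbound : ∑ i ∈ Finset.range (m' + 1), σ (ℓ + i + 1) ^ 2
          ≤ ρ₁₂ * (∑ i ∈ Finset.range (m' + 1), σ (ℓ + i) ^ 2)
            + Λ₁₁ * (∑ i ∈ Finset.range (m' + 1), δ (ℓ + i) ^ 2) := by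
        rw [Finset.mul_sum, Finset.mul_sum, ← Finset.sum_add_distrib]
        exact Finset.sum_le_sum fun i _ => hred (ℓ + i)
      have hS' : ∑ i ∈ Finset.range (m' + 1), σ (ℓ + i) ^ 2 ≤ S := by
        rw [hS, hrw]
        exact Finset.sum_le_sum_of_subset_of_nonneg
          (Finset.range_subset_range.mpr (by omega)) fun i _ _ => sq_nonneg _
      have hD : ∑ i ∈ Finset.range (m' + 1), δ (ℓ + i) ^ 2 ≤ Λ₄ * σ ℓ ^ 2 := by
        have h := hqo ℓ m'
        rwa [hrw] at h
      nlinarith [mul_le_mul_of_nonneg_left hS' hρ.le,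
        mul_le_mul_of_nonneg_left hD hΛ.le]
  nlinarith [key]
end

section
/- Let (σ_k) be a sequence of nonnegative reals such that for some constant Λ ≥ 1 the tail bound ∑_{k=ℓ}^{ℓ+m} σ_k² ≤ Λ σ_ℓ² holds for all ℓ, m ∈ ℕ, and suppose the series ∑ σ_k² converges. Then with q := Λ/(1+Λ) < 1, for all ℓ, m ∈ ℕ one has σ_{ℓ+m}² ≤ (q^m/(1-q)) σ_ℓ², i.e. R-linear convergence. -/
theorem stmt_1 (Λ : ℝ) (σ : ℕ → ℝ) (hΛ : 1 ≤ Λ)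
    (hσ : ∀ k, 0 ≤ σ k)
    (hsum : Summable fun k => σ k ^ 2)
    (htail : ∀ ℓ m : ℕ, ∑ k ∈ Finset.Icc ℓ (ℓ + m), σ k ^ 2 ≤ Λ * σ ℓ ^ 2) :
    ∀ ℓ m : ℕ, σ (ℓ + m) ^ 2 ≤ (Λ / (1 + Λ)) ^ m / (1 - Λ / (1 + Λ)) * σ ℓ ^ 2 := by
  have hΛ0 : (0:ℝ) < 1 + Λ := by linarith
  set q : ℝ := Λ / (1 + Λ) with hq
  have hq0 : 0 ≤ q := div_nonneg (by linarith) hΛ0.le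
  have hsum' : ∀ ℓ, Summable fun k => σ (ℓ + k) ^ 2 := by
    intro ℓ
    have := (summable_nat_add_iff ℓ).2 hsum
    simpa [add_comm] using this
  set T : ℕ → ℝ := fun ℓ => ∑' k, σ (ℓ + k) ^ 2 with hTdef
  have hTnonneg : ∀ ℓ, 0 ≤ T ℓ := fun ℓ =>
    tsum_nonneg fun k => sq_nonneg _
  have hTle : ∀ ℓ, T ℓ ≤ Λ * σ ℓ ^ 2 := by
    intro ℓ
    apply Summable.tsum_le_of_sum_range_le (hsum' ℓ)
    intro n
    rcases Nat.eq_zero_or_pos n with rfl | hn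
    · simp
      nlinarith [sq_nonneg (σ ℓ), hσ ℓ]
    · obtain ⟨m, rfl⟩ := Nat.exists_eq_add_of_le hn
      have h := htail ℓ m
      rw [← Finset.Ico_add_one_right_eq_Icc, Finset.sum_Ico_eq_sum_range, show ℓ + m + 1 - ℓ = m + 1 by omega] at h
      simpa [Nat.add_sub_cancel_left, Nat.succ_sub_one, add_comm 1 m] using h
  have hTrec : ∀ ℓ, T ℓ = σ ℓ ^ 2 + T (ℓ + 1) := by
    intro ℓ
    have := Summable.tsum_eq_zero_add (f := fun k => σ (ℓ + k) ^ 2) (hsum' ℓ)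
    simpa [hTdef, add_assoc, add_comm, add_left_comm] using this
  have hkey : ∀ ℓ, T (ℓ + 1) ≤ q * T ℓ := by
    intro ℓ
    have h1 := hTle ℓ
    have h2 := hTrec ℓ
    have h3 : T (ℓ + 1) ≤ Λ * σ ℓ ^ 2 := by nlinarith [sq_nonneg (σ ℓ)]
    rw [hq, div_mul_eq_mul_div, le_div_iff₀ hΛ0]
    nlinarith [sq_nonneg (σ ℓ)]
  have hiter : ∀ ℓ m, T (ℓ + m) ≤ q ^ m * T ℓ := by
    intro ℓ m
    induction m with
    | zero => simp
    | succ n ih =>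
      calc T (ℓ + (n + 1)) = T ((ℓ + n) + 1) := by ring_nf
        _ ≤ q * T (ℓ + n) := hkey _
        _ ≤ q * (q ^ n * T ℓ) := by
            exact mul_le_mul_of_nonneg_left ih hq0
        _ = q ^ (n + 1) * T ℓ := by ring
  intro ℓ m
  have hfirst : σ (ℓ + m) ^ 2 ≤ T (ℓ + m) := by
    rw [hTrec (ℓ + m)]
    nlinarith [hTnonneg (ℓ + m + 1)]
  have : σ (ℓ + m) ^ 2 ≤ q ^ m * (Λ * σ ℓ ^ 2) :=
    hfirst.trans ((hiter ℓ m).trans (mul_le_mul_of_nonneg_left (hTle ℓ) (pow_nonneg hq0 m)))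
  have hrw : q ^ m / (1 - q) = q ^ m * (1 + Λ) := by
    rw [hq]
    field_simp
    ring
  rw [hrw]
  nlinarith [pow_nonneg hq0 m, sq_nonneg (σ ℓ)]
end

section
/- Let (σ_k), (δ_k) be nonnegative sequences with σ_{k+1}² ≤ ρ₁₂ σ_k² + Λ₁₁ δ_k² for all k (constants 0<ρ₁₂<1, Λ₁₁>0), and suppose the ε-quasiorthogonality ∑_{k=ℓ}^{ℓ+m} δ_k² ≤ Λ₄^ε σ_ℓ² + ε ∑_{k=ℓ}^{ℓ+m} σ_k² holds for all ℓ, m with some ε satisfying 0 ≤ ε < (1-ρ₁₂)/Λ₁₁. Then the exact quasiorthogonality holds: ∑_{k=ℓ}^{ℓ+m} δ_k² ≤ Λ₄ σ_ℓ² for all ℓ, m, with Λ₄ := Λ₄^ε + ε(1+Λ₁₁Λ₄^ε)/(1-ρ₁₂-εΛ₁₁). -/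
theorem stmt_3 (ρ₁₂ Λ₁₁ Λ₄ε ε : ℝ) (σ δ : ℕ → ℝ)
    (hρ : 0 < ρ₁₂) (hρ' : ρ₁₂ < 1) (hΛ : 0 < Λ₁₁) (hΛ₄ε : 0 < Λ₄ε)
    (hε : 0 ≤ ε) (hε' : ε < (1 - ρ₁₂) / Λ₁₁)
    (hσ : ∀ k, 0 ≤ σ k) (hδ : ∀ k, 0 ≤ δ k)
    (hred : ∀ k, σ (k + 1) ^ 2 ≤ ρ₁₂ * σ k ^ 2 + Λ₁₁ * δ k ^ 2)
    (hqoε : ∀ ℓ m : ℕ, ∑ k ∈ Finset.Icc ℓ (ℓ + m), δ k ^ 2 ≤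
      Λ₄ε * σ ℓ ^ 2 + ε * ∑ k ∈ Finset.Icc ℓ (ℓ + m), σ k ^ 2) :
    ∀ ℓ m : ℕ, ∑ k ∈ Finset.Icc ℓ (ℓ + m), δ k ^ 2 ≤
      (Λ₄ε + ε * (1 + Λ₁₁ * Λ₄ε) / (1 - ρ₁₂ - ε * Λ₁₁)) * σ ℓ ^ 2 := by
  intro ℓ m
  set S : ℝ := ∑ k ∈ Finset.Icc ℓ (ℓ + m), σ k ^ 2 with hS
  set D : ℝ := ∑ k ∈ Finset.Icc ℓ (ℓ + m), δ k ^ 2 with hD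
  have hc : 0 < 1 - ρ₁₂ - ε * Λ₁₁ := by
    have := (lt_div_iff₀ hΛ).mp hε'
    linarith
  -- Step 1: S ≤ σ ℓ ^ 2 + ∑ σ (k+1)^2
  have hsplit : S ≤ σ ℓ ^ 2 + ∑ k ∈ Finset.Icc ℓ (ℓ + m), σ (k + 1) ^ 2 := by
    have h1 : S = σ ℓ ^ 2 + ∑ k ∈ Finset.Ioc ℓ (ℓ + m), σ k ^ 2 := by
      rw [hS, Finset.Icc_eq_cons_Ioc (Nat.le_add_right ℓ m), Finset.sum_cons]
    have h2 : ∑ k ∈ Finset.Icc ℓ (ℓ + m), σ (k + 1) ^ 2 =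
        ∑ k ∈ Finset.Icc (ℓ + 1) (ℓ + m + 1), σ k ^ 2 := by
      rw [← Finset.map_add_right_Icc, Finset.sum_map]
      simp [addRightEmbedding]
    have h3 : ∑ k ∈ Finset.Ioc ℓ (ℓ + m), σ k ^ 2 ≤
        ∑ k ∈ Finset.Icc (ℓ + 1) (ℓ + m + 1), σ k ^ 2 := by
      apply Finset.sum_le_sum_of_subset_of_nonneg
      · intro x hx
        simp only [Finset.mem_Ioc, Finset.mem_Icc] at *
        omega
      · intro i _ _; positivity
    rw [h1, h2]; linarith
  -- Step 2: ∑ σ(k+1)^2 ≤ ρ₁₂ S + Λ₁₁ D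
  have hsum : ∑ k ∈ Finset.Icc ℓ (ℓ + m), σ (k + 1) ^ 2 ≤ ρ₁₂ * S + Λ₁₁ * D := by
    calc ∑ k ∈ Finset.Icc ℓ (ℓ + m), σ (k + 1) ^ 2
        ≤ ∑ k ∈ Finset.Icc ℓ (ℓ + m), (ρ₁₂ * σ k ^ 2 + Λ₁₁ * δ k ^ 2) :=
          Finset.sum_le_sum fun k _ => hred k
      _ = ρ₁₂ * S + Λ₁₁ * D := by
          rw [Finset.sum_add_distrib, ← Finset.mul_sum, ← Finset.mul_sum]
  have hqo : D ≤ Λ₄ε * σ ℓ ^ 2 + ε * S := hqoε ℓ m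
  -- combine: (1 - ρ₁₂ - ε Λ₁₁) S ≤ (1 + Λ₁₁ Λ₄ε) σ ℓ ^ 2
  have hSbound : S ≤ (1 + Λ₁₁ * Λ₄ε) / (1 - ρ₁₂ - ε * Λ₁₁) * σ ℓ ^ 2 := by
    rw [div_mul_eq_mul_div, le_div_iff₀ hc]
    nlinarith [hσ ℓ]
  have hεS : ε * S ≤ ε * ((1 + Λ₁₁ * Λ₄ε) / (1 - ρ₁₂ - ε * Λ₁₁) * σ ℓ ^ 2) :=
    mul_le_mul_of_nonneg_left hSbound hε
  calc D ≤ Λ₄ε * σ ℓ ^ 2 + ε * S := hqo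
    _ ≤ (Λ₄ε + ε * (1 + Λ₁₁ * Λ₄ε) / (1 - ρ₁₂ - ε * Λ₁₁)) * σ ℓ ^ 2 := by
        rw [add_mul]
        have : ε * (1 + Λ₁₁ * Λ₄ε) / (1 - ρ₁₂ - ε * Λ₁₁) * σ ℓ ^ 2 =
            ε * ((1 + Λ₁₁ * Λ₄ε) / (1 - ρ₁₂ - ε * Λ₁₁) * σ ℓ ^ 2) := by ring
        rw [this]; linarith
end

section
/- Let a, b, δ, â ≥ 0 and suppose: (i) for every λ > 0, â restricted parts satisfy â₁² ≤ (1+1/λ) a₁² + (1+λ)Λ₂² δ², (ii) â₂² ≤ (1+1/λ)ρ² a₂² + (1+λ)Λ₃² δ² with 0<ρ<1, (iii) δ² ≤ Λ₆(a²+μ²) + Λ₇ â², where â² = â₁² + â₂², a₁² + a₂² ≤ a², and M̂ := (Λ₂²+Λ₃²)Λ₇ < 1, M := (Λ₂²+Λ₃²)Λ₆. Then â ≤ Λ_qm^η · √(a²+μ²), where Λ_qm^η := (1 + M(1-M̂) + M̂ + 2√(M(1-M̂)+M̂))/(1-M̂)². -/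
set_option maxHeartbeats 1000000 in
theorem stmt_4 (Λ₂ Λ₃ Λ₆ Λ₇ ρ a a₁ a₂ ahat ahat₁ ahat₂ δ μ : ℝ)
    (hρ : 0 < ρ) (hρ' : ρ < 1)
    (ha : 0 ≤ a) (ha₁ : 0 ≤ a₁) (ha₂ : 0 ≤ a₂) (hahat : 0 ≤ ahat)
    (hahat₁ : 0 ≤ ahat₁) (hahat₂ : 0 ≤ ahat₂) (hδ : 0 ≤ δ) (hμ : 0 ≤ μ)
    (hΛ₂ : 0 ≤ Λ₂) (hΛ₃ : 0 ≤ Λ₃) (hΛ₆ : 0 ≤ Λ₆) (hΛ₇ : 0 ≤ Λ₇)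
    (hA1 : ∀ lam : ℝ, 0 < lam →
      ahat₁ ^ 2 ≤ (1 + 1 / lam) * a₁ ^ 2 + (1 + lam) * Λ₂ ^ 2 * δ ^ 2)
    (hA2 : ∀ lam : ℝ, 0 < lam →
      ahat₂ ^ 2 ≤ (1 + 1 / lam) * ρ ^ 2 * a₂ ^ 2 + (1 + lam) * Λ₃ ^ 2 * δ ^ 2)
    (hA3 : δ ^ 2 ≤ Λ₆ * (a ^ 2 + μ ^ 2) + Λ₇ * ahat ^ 2)
    (hsplit : ahat ^ 2 = ahat₁ ^ 2 + ahat₂ ^ 2)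
    (hsub : a₁ ^ 2 + a₂ ^ 2 ≤ a ^ 2)
    (hMhat : (Λ₂ ^ 2 + Λ₃ ^ 2) * Λ₇ < 1) :
    ahat ≤ (1 + ((Λ₂ ^ 2 + Λ₃ ^ 2) * Λ₆) * (1 - (Λ₂ ^ 2 + Λ₃ ^ 2) * Λ₇)
          + (Λ₂ ^ 2 + Λ₃ ^ 2) * Λ₇
          + 2 * Real.sqrt (((Λ₂ ^ 2 + Λ₃ ^ 2) * Λ₆) * (1 - (Λ₂ ^ 2 + Λ₃ ^ 2) * Λ₇)
              + (Λ₂ ^ 2 + Λ₃ ^ 2) * Λ₇))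
        / (1 - (Λ₂ ^ 2 + Λ₃ ^ 2) * Λ₇) ^ 2 * Real.sqrt (a ^ 2 + μ ^ 2) := by
  set M := (Λ₂ ^ 2 + Λ₃ ^ 2) * Λ₆ with hMdef
  set Mh := (Λ₂ ^ 2 + Λ₃ ^ 2) * Λ₇ with hMhdef
  set s := Real.sqrt (M * (1 - Mh) + Mh) with hsdef
  set σ2 := a ^ 2 + μ ^ 2 with hσ2def
  have hEpos : (0:ℝ) ≤ Λ₂ ^ 2 + Λ₃ ^ 2 := by positivity
  have hMpos : 0 ≤ M := mul_nonneg hEpos hΛ₆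
  have hMhpos : 0 ≤ Mh := mul_nonneg hEpos hΛ₇
  have hMh1 : Mh < 1 := hMhat
  have harg : 0 ≤ M * (1 - Mh) + Mh :=
    add_nonneg (mul_nonneg hMpos (by linarith only [hMh1])) hMhpos
  have hs0 : 0 ≤ s := Real.sqrt_nonneg _
  have hs2 : s ^ 2 = M * (1 - Mh) + Mh := Real.sq_sqrt harg
  have hσ2n : 0 ≤ σ2 := by positivity
  clear_value M Mh s σ2
  have hcomb : ∀ lam : ℝ, 0 < lam →
      ahat ^ 2 ≤ (1 + 1 / lam) * σ2 + (1 + lam) * (M * σ2 + Mh * ahat ^ 2) := by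
    intro lam hl
    have h1 := hA1 lam hl
    have h2 := hA2 lam hl
    have hinv : (0:ℝ) ≤ 1 + 1 / lam := by positivity
    have hl1 : (0:ℝ) ≤ 1 + lam := by linarith
    have hρ1 : ρ ^ 2 ≤ 1 := by
      rw [sq]; exact mul_le_one₀ hρ'.le hρ.le hρ'.le
    have hρa : (1 + 1/lam) * ρ ^ 2 * a₂ ^ 2 ≤ (1 + 1/lam) * a₂ ^ 2 := by
      have h7 := mul_le_mul_of_nonneg_right
        (mul_le_mul_of_nonneg_left hρ1 hinv) (sq_nonneg a₂)
      linarith only [h7]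
    have step1 : ahat ^ 2 ≤ (1 + 1/lam) * (a₁ ^ 2 + a₂ ^ 2)
        + (1 + lam) * (Λ₂ ^ 2 + Λ₃ ^ 2) * δ ^ 2 := by
      linarith only [h1, h2, hsplit, hρa]
    have step2 : (1 + 1/lam) * (a₁ ^ 2 + a₂ ^ 2) ≤ (1 + 1/lam) * σ2 :=
      mul_le_mul_of_nonneg_left (by rw [hσ2def]; linarith only [sq_nonneg μ, hsub]) hinv
    have step3 : (1 + lam) * (Λ₂ ^ 2 + Λ₃ ^ 2) * δ ^ 2
        ≤ (1 + lam) * (M * σ2 + Mh * ahat ^ 2) := by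
      have h4 := mul_le_mul_of_nonneg_left hA3 (mul_nonneg hl1 hEpos)
      rw [hMdef, hMhdef]
      linarith only [h4]
    linarith only [step1, step2, step3]
  have key : (1 - Mh) ^ 2 * ahat ^ 2 ≤ (1 + s) ^ 2 * σ2 := by
    rcases eq_or_lt_of_le (by positivity : (0:ℝ) ≤ M + Mh) with hS | hS
    · have hM0 : M = 0 := by linarith only [hMpos, hMhpos, hS]
      have hMh0 : Mh = 0 := by linarith only [hMpos, hMhpos, hS]
      have hs00 : s = 0 := by rw [hsdef, hM0, hMh0]; simp
      have hb : ahat ^ 2 ≤ σ2 := by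
        refine le_of_forall_pos_le_add ?_
        intro ε hε
        have hl : 0 < σ2 / ε + 1 := by positivity
        have hc := hcomb _ hl
        rw [hM0, hMh0] at hc
        have h4 : σ2 * (1 / (σ2/ε + 1)) ≤ ε := by
          rw [mul_one_div, div_le_iff₀ hl]
          have he : ε * (σ2/ε) = σ2 := by field_simp
          linarith only [he, hε.le]
        linarith only [hc, h4]
      rw [hMh0, hs00]; norm_num; linarith only [hb]
    · have hsM : Mh < s := by
        rw [hsdef]
        refine (Real.lt_sqrt hMhpos).mpr ?_
        have hprod := mul_pos hS (show (0:ℝ) < 1 - Mh by linarith only [hMh1])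
        linarith only [hprod]
      have hspos : 0 < s := lt_of_le_of_lt hMhpos hsM
      set lam := (s - Mh) / (M + Mh) with hlamdef
      have hl : 0 < lam := div_pos (by linarith) hS
      have h1 := hcomb lam hl
      have hsMne : s - Mh ≠ 0 := ne_of_gt (by linarith)
      have hSne : M + Mh ≠ 0 := ne_of_gt hS
      have e1 : 1 + 1/lam = (s + M)/(s - Mh) := by
        rw [hlamdef]
        first
        | (field_simp; ring)
        | field_simp
      have e2 : 1 + lam = (s + M)/(M + Mh) := by
        rw [hlamdef]
        first
        | (field_simp; ring)
        | field_simp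
      rw [e1, e2] at h1
      have h3 := mul_le_mul_of_nonneg_left h1
        (le_of_lt (mul_pos (show 0 < s - Mh by linarith) hS))
      have e3 : (s - Mh) * (M + Mh) * ((s + M)/(s - Mh) * σ2
            + (s + M)/(M + Mh) * (M * σ2 + Mh * ahat ^ 2))
          = (s + M) * (M + Mh) * σ2
            + (s - Mh) * (s + M) * (M * σ2 + Mh * ahat ^ 2) := by
        field_simp
      rw [e3] at h3
      have id1 : s * ((s + M) ^ 2 * σ2 - (s - Mh) ^ 2 * ahat ^ 2)
          = ((s + M) * (M + Mh) * σ2 + (s - Mh) * (s + M) * (M * σ2 + Mh * ahat ^ 2))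
            - (s - Mh) * (M + Mh) * ahat ^ 2 := by
        linear_combination (σ2 * (s + M) - ahat ^ 2 * (s - Mh)) * hs2
      have stepA : (s - Mh) ^ 2 * ahat ^ 2 ≤ (s + M) ^ 2 * σ2 := by
        have h5 : 0 ≤ s * ((s + M) ^ 2 * σ2 - (s - Mh) ^ 2 * ahat ^ 2) := by
          rw [id1]; linarith only [h3]
        have h6 := (mul_nonneg_iff_of_pos_left hspos).mp h5
        linarith only [h6]
      have stepB : (1 - Mh) * (s + M) = (1 + s) * (s - Mh) := by
        linear_combination (-1) * hs2
      have hc := mul_le_mul_of_nonneg_left stepA (sq_nonneg (1 - Mh))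
      have e4 : (1 - Mh) ^ 2 * ((s + M) ^ 2 * σ2) = (s - Mh) ^ 2 * ((1 + s) ^ 2 * σ2) := by
        linear_combination (σ2 * ((1 - Mh) * (s + M) + (1 + s) * (s - Mh))) * stepB
      have hp : 0 < (s - Mh) ^ 2 := pow_pos (by linarith only [hsM]) 2
      have h7 : 0 ≤ (s - Mh) ^ 2 * ((1 + s) ^ 2 * σ2 - (1 - Mh) ^ 2 * ahat ^ 2) := by
        linarith only [hc, e4]
      have h8 := (mul_nonneg_iff_of_pos_left hp).mp h7
      linarith only [h8]
  have h1Mh : 0 < 1 - Mh := by linarith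
  have hfin : (1 - Mh) * ahat ≤ (1 + s) * Real.sqrt σ2 := by
    have hq : ((1 - Mh) * ahat) ^ 2 ≤ ((1 + s) * Real.sqrt σ2) ^ 2 := by
      rw [mul_pow, mul_pow, Real.sq_sqrt hσ2n]; linarith [key]
    have hmono := Real.sqrt_le_sqrt hq
    rwa [Real.sqrt_sq (mul_nonneg h1Mh.le hahat),
      Real.sqrt_sq (mul_nonneg (by linarith) (Real.sqrt_nonneg _))] at hmono
  rw [div_mul_eq_mul_div, le_div_iff₀ (by positivity)]
  have e5 : 1 + M * (1 - Mh) + Mh + 2 * s = (1 + s) ^ 2 := by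
    linear_combination (-1 : ℝ) * hs2
  rw [e5]
  have hA := mul_le_mul_of_nonneg_left hfin h1Mh.le
  have hB := mul_nonneg (mul_nonneg
      (show (0:ℝ) ≤ s + Mh by linarith only [hs0, hMhpos])
      (show (0:ℝ) ≤ 1 + s by linarith only [hs0])) (Real.sqrt_nonneg σ2)
  linarith only [hA, hB]
end

section
/- Let η, η̂, μ, μ̂, δ ≥ 0 satisfy η̂² ≤ ρ_A η² + Λ₁₁ δ² with 0<ρ_A<1, μ̂² ≤ Λ₅ μ² with Λ₅ ≥ 1, and the Dörfler-case condition μ² ≤ κ η² with 0 < κ < κ₀ := (1−ρ_A)/(Λ₅−1) (κ₀ := ∞ if Λ₅=1). Then σ̂² := η̂² + μ̂² ≤ ((ρ_A + κΛ₅)/(1+κ)) σ² + Λ₁₁ δ², where σ² := η² + μ², and (ρ_A + κΛ₅)/(1+κ) < 1. -/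
theorem stmt_6 (η ηhat μ μhat δ ρA Λ₁₁ Λ₅ κ : ℝ)
    (hη : 0 ≤ η) (hηhat : 0 ≤ ηhat) (hμ : 0 ≤ μ) (hμhat : 0 ≤ μhat) (hδ : 0 ≤ δ)
    (hρA : 0 < ρA) (hρA' : ρA < 1) (hΛ₁₁ : 0 < Λ₁₁) (hΛ₅ : 1 ≤ Λ₅)
    (hκ : 0 < κ) (hκ₀ : κ * (Λ₅ - 1) < 1 - ρA)
    (hred : ηhat ^ 2 ≤ ρA * η ^ 2 + Λ₁₁ * δ ^ 2)
    (hdata : μhat ^ 2 ≤ Λ₅ * μ ^ 2)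
    (hcaseA : μ ^ 2 ≤ κ * η ^ 2) :
    ηhat ^ 2 + μhat ^ 2 ≤ (ρA + κ * Λ₅) / (1 + κ) * (η ^ 2 + μ ^ 2) + Λ₁₁ * δ ^ 2 ∧
      (ρA + κ * Λ₅) / (1 + κ) < 1 := by
  have hκ1 : (0:ℝ) < 1 + κ := by linarith
  constructor
  · have h2 : ρA * η ^ 2 + Λ₅ * μ ^ 2 ≤ (ρA + κ * Λ₅) / (1 + κ) * (η ^ 2 + μ ^ 2) := by
      rw [div_mul_eq_mul_div, le_div_iff₀ hκ1]
      nlinarith [mul_nonneg (sub_nonneg.2 hcaseA) (by linarith : (0:ℝ) ≤ Λ₅ - ρA)]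
    linarith
  · rw [div_lt_one hκ1]; nlinarith
end

section
/- Let η, η̂, μ, μ̂, δ ≥ 0 satisfy η̂² ≤ (1+λ) η² + Λ₁₁ δ² with λ > 0, μ̂² ≤ ρ_B μ² with 0<ρ_B<1, and the data-dominated condition κ η² < μ² with κ > 0 and λ < κ(1−ρ_B). Then σ̂² := η̂² + μ̂² < ((1+λ+κρ_B)/(1+κ)) σ² + Λ₁₁ δ², where σ² := η² + μ², and (1+λ+κρ_B)/(1+κ) < 1. -/
theorem stmt_7 (η ηhat μ μhat δ lam Λ₁₁ ρB κ : ℝ)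
    (hη : 0 ≤ η) (hηhat : 0 ≤ ηhat) (hμ : 0 ≤ μ) (hμhat : 0 ≤ μhat) (hδ : 0 ≤ δ)
    (hlam : 0 < lam) (hΛ₁₁ : 0 < Λ₁₁) (hρB : 0 < ρB) (hρB' : ρB < 1)
    (hκ : 0 < κ) (hlamκ : lam < κ * (1 - ρB))
    (hred : ηhat ^ 2 ≤ (1 + lam) * η ^ 2 + Λ₁₁ * δ ^ 2)
    (hdata : μhat ^ 2 ≤ ρB * μ ^ 2)
    (hcaseB : κ * η ^ 2 < μ ^ 2) :
    ηhat ^ 2 + μhat ^ 2 < (1 + lam + κ * ρB) / (1 + κ) * (η ^ 2 + μ ^ 2) + Λ₁₁ * δ ^ 2 ∧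
      (1 + lam + κ * ρB) / (1 + κ) < 1 := by
  have hκ1 : (0:ℝ) < 1 + κ := by linarith
  constructor
  · have key : (1 + lam) * η ^ 2 + ρB * μ ^ 2 <
        (1 + lam + κ * ρB) / (1 + κ) * (η ^ 2 + μ ^ 2) := by
      rw [div_mul_eq_mul_div, lt_div_iff₀ hκ1]
      nlinarith [mul_lt_mul_of_pos_left hcaseB (show (0:ℝ) < 1 + lam - ρB by linarith)]
    linarith
  · rw [div_lt_one hκ1]; linarith
end

section
/- Combining both cases: under the hypotheses of the estimator reduction theorem (A1)-(A2), parameters 0<θ_A≤1, κ>0, 0<ρ_B<1/Λ₅, γ and λ chosen with 0<γ<ρ₂^{-2}−1 and 0<λ<min{(1−(1+γ)ρ₂²)θ_A/(1−θ_A), κ(1−ρ_B)}, and 0<κ<κ₀:=(1−ρ_A)/(Λ₅−1), the output of SAFEM satisfies σ_{ℓ+1}² ≤ ρ₁₂ σ_ℓ² + Λ₁₁ δ_{ℓ,ℓ+1}² for all ℓ, where ρ₁₂ := max{ρ_A+κΛ₅, 1+λ+κρ_B}/(1+κ) < 1 and Λ₁₁ := (1+1/λ)Λ₂² + (1+1/γ)Λ₃².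 -/
set_option maxHeartbeats 1000000 in
theorem stmt_8 (ρ₂ θA κ ρB γ lam Λ₂ Λ₃ Λ₅ : ℝ) (η μ δ : ℕ → ℝ)
    (hρ₂ : 0 < ρ₂) (hρ₂' : ρ₂ < 1) (hθ : 0 < θA) (hθ' : θA ≤ 1)
    (hκ : 0 < κ) (hρB : 0 < ρB) (hρB' : ρB < 1 / Λ₅)
    (hγ : 0 < γ) (hγ' : γ < ρ₂ ^ (-2 : ℤ) - 1)
    (hlam : 0 < lam)
    (hlam' : lam < min ((1 - (1 + γ) * ρ₂ ^ 2) * θA / (1 - θA)) (κ * (1 - ρB)))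
    (hΛ₂ : 0 ≤ Λ₂) (hΛ₃ : 0 ≤ Λ₃) (hΛ₅ : 1 ≤ Λ₅)
    (hκ₀ : κ * (Λ₅ - 1) < 1 - ((1 + lam) * (1 - θA) + (1 + γ) * ρ₂ ^ 2 * θA))
    (hη : ∀ ℓ, 0 ≤ η ℓ) (hμ : ∀ ℓ, 0 ≤ μ ℓ) (hδ : ∀ ℓ, 0 ≤ δ ℓ)
    (hcases : ∀ ℓ : ℕ,
      (μ ℓ ^ 2 ≤ κ * η ℓ ^ 2 ∧
        η (ℓ + 1) ^ 2 ≤ ((1 + lam) * (1 - θA) + (1 + γ) * ρ₂ ^ 2 * θA) * η ℓ ^ 2 +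
          ((1 + 1 / lam) * Λ₂ ^ 2 + (1 + 1 / γ) * Λ₃ ^ 2) * δ ℓ ^ 2 ∧
        μ (ℓ + 1) ^ 2 ≤ Λ₅ * μ ℓ ^ 2) ∨
      (κ * η ℓ ^ 2 < μ ℓ ^ 2 ∧
        η (ℓ + 1) ^ 2 ≤ (1 + lam) * η ℓ ^ 2 +
          ((1 + 1 / lam) * Λ₂ ^ 2 + (1 + 1 / γ) * Λ₃ ^ 2) * δ ℓ ^ 2 ∧
        μ (ℓ + 1) ^ 2 ≤ ρB * μ ℓ ^ 2)) :
    (max (((1 + lam) * (1 - θA) + (1 + γ) * ρ₂ ^ 2 * θA) + κ * Λ₅)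
        (1 + lam + κ * ρB) / (1 + κ) < 1) ∧
    ∀ ℓ : ℕ, η (ℓ + 1) ^ 2 + μ (ℓ + 1) ^ 2 ≤
      max (((1 + lam) * (1 - θA) + (1 + γ) * ρ₂ ^ 2 * θA) + κ * Λ₅)
        (1 + lam + κ * ρB) / (1 + κ) * (η ℓ ^ 2 + μ ℓ ^ 2) +
      ((1 + 1 / lam) * Λ₂ ^ 2 + (1 + 1 / γ) * Λ₃ ^ 2) * δ ℓ ^ 2 := by
  have hκ1 : (0:ℝ) < 1 + κ := by linarith
  set ρA := (1 + lam) * (1 - θA) + (1 + γ) * ρ₂ ^ 2 * θA with hρAdef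
  set L := (1 + 1 / lam) * Λ₂ ^ 2 + (1 + 1 / γ) * Λ₃ ^ 2 with hLdef
  have hlamB : lam < κ * (1 - ρB) := lt_of_lt_of_le hlam' (min_le_right _ _)
  have hρA1 : ρA < 1 := by nlinarith [mul_nonneg hκ.le (sub_nonneg.2 hΛ₅)]
  have hρB1 : ρB < 1 := by
    have : 0 < κ * (1 - ρB) := lt_of_le_of_lt hlam.le hlamB
    nlinarith
  constructor
  · rw [div_lt_one hκ1, max_lt_iff]
    constructor
    · linarith
    · nlinarith
  · intro ℓ
    have hσ : 0 ≤ η ℓ ^ 2 + μ ℓ ^ 2 := by positivity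
    have key : η (ℓ+1) ^ 2 + μ (ℓ+1) ^ 2 - L * δ ℓ ^ 2 ≤
        max (ρA + κ * Λ₅) (1 + lam + κ * ρB) / (1 + κ) * (η ℓ ^ 2 + μ ℓ ^ 2) := by
      rw [div_mul_eq_mul_div, le_div_iff₀ hκ1]
      rcases hcases ℓ with ⟨h1, h2, h3⟩ | ⟨h1, h2, h3⟩
      · have hm : ρA + κ * Λ₅ ≤ max (ρA + κ * Λ₅) (1 + lam + κ * ρB) := le_max_left _ _
        have step2 : (1 + κ) * (ρA * η ℓ ^ 2 + Λ₅ * μ ℓ ^ 2) ≤ (ρA + κ * Λ₅) * (η ℓ ^ 2 + μ ℓ ^ 2) := by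
          nlinarith [mul_nonneg (sub_nonneg.2 (hρA1.le.trans hΛ₅)) (sub_nonneg.2 h1)]
        have step3 : (ρA + κ * Λ₅) * (η ℓ ^ 2 + μ ℓ ^ 2) ≤
            max (ρA + κ * Λ₅) (1 + lam + κ * ρB) * (η ℓ ^ 2 + μ ℓ ^ 2) :=
          mul_le_mul_of_nonneg_right hm hσ
        have step1 : η (ℓ+1) ^ 2 + μ (ℓ+1) ^ 2 - L * δ ℓ ^ 2 ≤ ρA * η ℓ ^ 2 + Λ₅ * μ ℓ ^ 2 := by
          linarith
        linarith [mul_le_mul_of_nonneg_right step1 hκ1.le]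
      · have hm : 1 + lam + κ * ρB ≤ max (ρA + κ * Λ₅) (1 + lam + κ * ρB) := le_max_right _ _
        have step2 : (1 + κ) * ((1 + lam) * η ℓ ^ 2 + ρB * μ ℓ ^ 2) ≤
            (1 + lam + κ * ρB) * (η ℓ ^ 2 + μ ℓ ^ 2) := by
          nlinarith [mul_nonneg (by linarith : (0:ℝ) ≤ 1 + lam - ρB) (sub_nonneg.2 h1.le)]
        have step3 : (1 + lam + κ * ρB) * (η ℓ ^ 2 + μ ℓ ^ 2) ≤
            max (ρA + κ * Λ₅) (1 + lam + κ * ρB) * (η ℓ ^ 2 + μ ℓ ^ 2) :=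
          mul_le_mul_of_nonneg_right hm hσ
        have step1 : η (ℓ+1) ^ 2 + μ (ℓ+1) ^ 2 - L * δ ℓ ^ 2 ≤ (1 + lam) * η ℓ ^ 2 + ρB * μ ℓ ^ 2 := by
          linarith
        linarith [mul_le_mul_of_nonneg_right step1 hκ1.le]
    linarith
end

section
/- Suppose real numbers η_ℓ, μ_ℓ, σ_ℓ ≥ 0 with σ_ℓ² = η_ℓ² + μ_ℓ², a refinement with σ(T̂_ℓ) ≤ ξσ_ℓ, and the stability/discrete-reliability consequence η²_ℓ(T_ℓ∩T̂_ℓ) ≤ (1+ν+(1+1/ν)Λ₂²Λ₇)η²(T̂_ℓ) + (1+1/ν)Λ₂²Λ₆(η²_ℓ(R) + μ²_ℓ) for any ν>0, where R ⊇ T_ℓ\T̂_ℓ. Then (1 − ξ²(1+ν+(1+1/ν)Λ₂²Λ₇)) η_ℓ² ≤ (1+(1+1/ν)Λ₂²Λ₆) η²_ℓ(R) + ((1+ν)ξ² + (1+1/ν)Λ₂²(Λ₆+Λ₇ξ²)) μ²_ℓ. -/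
theorem stmt_12 (ηℓ μℓ σℓ ηcap ηdiff ηR ηhat ξ ν Λ₂ Λ₆ Λ₇ : ℝ)
    (hηℓ : 0 ≤ ηℓ) (hμℓ : 0 ≤ μℓ) (hσℓ : 0 ≤ σℓ)
    (hηcap : 0 ≤ ηcap) (hηdiff : 0 ≤ ηdiff) (hηR : 0 ≤ ηR) (hηhat : 0 ≤ ηhat)
    (hξ : 0 < ξ) (hξ' : ξ < 1) (hν : 0 < ν)
    (hΛ₂ : 0 ≤ Λ₂) (hΛ₆ : 0 ≤ Λ₆) (hΛ₇ : 0 ≤ Λ₇)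
    (hσ : σℓ ^ 2 = ηℓ ^ 2 + μℓ ^ 2)
    (hsplit : ηℓ ^ 2 = ηcap ^ 2 + ηdiff ^ 2)
    (hR : ηdiff ^ 2 ≤ ηR ^ 2)
    (hηhatσ : ηhat ^ 2 ≤ ξ ^ 2 * σℓ ^ 2)
    (hstab : ηcap ^ 2 ≤ (1 + ν + (1 + 1 / ν) * Λ₂ ^ 2 * Λ₇) * ηhat ^ 2 +
      (1 + 1 / ν) * Λ₂ ^ 2 * Λ₆ * (ηR ^ 2 + μℓ ^ 2)) :
    (1 - ξ ^ 2 * (1 + ν + (1 + 1 / ν) * Λ₂ ^ 2 * Λ₇)) * ηℓ ^ 2 ≤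
      (1 + (1 + 1 / ν) * Λ₂ ^ 2 * Λ₆) * ηR ^ 2 +
      ((1 + ν) * ξ ^ 2 + (1 + 1 / ν) * Λ₂ ^ 2 * (Λ₆ + Λ₇ * ξ ^ 2)) * μℓ ^ 2 := by
  have hC : (0:ℝ) ≤ 1 + ν + (1 + 1 / ν) * Λ₂ ^ 2 * Λ₇ := by positivity
  have h1 : (1 + ν + (1 + 1 / ν) * Λ₂ ^ 2 * Λ₇) * ηhat ^ 2 ≤
      (1 + ν + (1 + 1 / ν) * Λ₂ ^ 2 * Λ₇) * (ξ ^ 2 * σℓ ^ 2) :=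
    mul_le_mul_of_nonneg_left hηhatσ hC
  rw [hσ] at h1
  linarith [h1, hstab, hR, hsplit]
end

section
/- In Case (A) with μ_ℓ² ≤ κη_ℓ² and the bound of the comparison lemma, the set R := R(T_ℓ, T̂_ℓ) satisfies the Dörfler property θ_A η_ℓ² ≤ η²_ℓ(R) whenever θ_A < f(ξ,ν) with f as in the optimality proof: (1 − (1+κ)ξ²(1+ν) − (1+κ)ξ²(1+1/ν)Λ₂²Λ₇ − κ(1+1/ν)Λ₂²Λ₆) η_ℓ² ≤ (1 + (1+1/ν)Λ₂²Λ₆) η²_ℓ(R). -/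
theorem stmt_14 (κ ξ ν Λ₂ Λ₆ Λ₇ θA ηℓ μℓ ηR : ℝ)
    (hκ : 0 < κ) (hξ : 0 < ξ) (hξ' : ξ < 1) (hν : 0 < ν)
    (hΛ₂ : 0 ≤ Λ₂) (hΛ₆ : 0 ≤ Λ₆) (hΛ₇ : 0 ≤ Λ₇)
    (hηℓ : 0 ≤ ηℓ) (hμℓ : 0 ≤ μℓ) (hηR : 0 ≤ ηR)
    (hcaseA : μℓ ^ 2 ≤ κ * ηℓ ^ 2)
    (hbound : (1 - (1 + κ) * ξ ^ 2 * (1 + ν) - (1 + κ) * ξ ^ 2 * (1 + 1 / ν) * Λ₂ ^ 2 * Λ₇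
        - κ * (1 + 1 / ν) * Λ₂ ^ 2 * Λ₆) * ηℓ ^ 2 ≤
      (1 + (1 + 1 / ν) * Λ₂ ^ 2 * Λ₆) * ηR ^ 2)
    (hθA : θA < (1 - ξ ^ 2 * ((1 + κ) * (1 + ν) + (1 + κ) * (1 + 1 / ν) * Λ₂ ^ 2 * Λ₇)
        - κ * (1 + 1 / ν) * Λ₂ ^ 2 * Λ₆) / (1 + (1 + 1 / ν) * Λ₂ ^ 2 * Λ₆)) :
    θA * ηℓ ^ 2 ≤ ηR ^ 2 := by
  set D : ℝ := 1 + (1 + 1 / ν) * Λ₂ ^ 2 * Λ₆ with hDdef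
  have hD : 0 < D := by rw [hDdef]; positivity
  rw [lt_div_iff₀ hD] at hθA
  have h1 : θA * D * ηℓ ^ 2 ≤ D * ηR ^ 2 := by
    calc θA * D * ηℓ ^ 2
        ≤ (1 - ξ ^ 2 * ((1 + κ) * (1 + ν) + (1 + κ) * (1 + 1 / ν) * Λ₂ ^ 2 * Λ₇)
            - κ * (1 + 1 / ν) * Λ₂ ^ 2 * Λ₆) * ηℓ ^ 2 := by
          apply mul_le_mul_of_nonneg_right (le_of_lt hθA) (by positivity)
      _ ≤ D * ηR ^ 2 := by nlinarith [hbound]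
  exact le_of_mul_le_mul_left (by linarith [h1]) hD
end
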